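/- A language L ⊆ A⁺ over a finite alphabet A is regular if and only if it is recognised by a finite semigroup, i.e., there exist a finite semigroup S, a semigroup homomorphism α : A⁺ → S from the free semigroup on A, and a subset F ⊆ S such that L = α⁻¹(F). -/

import Mathlib

/-- A bundled finite semigroup. -/
structure FinSemigroup where
  carrier : Type
  [str : Semigroup carrier]
  [fin : Finite carrier]

attribute [instance] FinSemigroup.str FinSemigroup.fin

/-- `h : A⁺ → S` is a semigroup homomorphism from the free semigroup `A⁺` of nonempty
words (under concatenation): it is multiplicative on nonempty words. (Its value on the
empty list is irrelevant.) -/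
def IsWordHom {A S : Type} [Semigroup S] (h : List A → S) : Prop :=
  ∀ u v : List A, u ≠ [] → v ≠ [] → h (u ++ v) = h u * h v

/-- The language `L ⊆ A⁺` is recognised by the semigroup homomorphism `h : A⁺ → S`
via the accepting set `F ⊆ S`: `L = h⁻¹(F)`. -/
def RecognisedBy {A S : Type} [Semigroup S] (h : List A → S) (F : Set S)
    (L : Set (List A)) : Prop :=
  IsWordHom h ∧ L = {w : List A | w ≠ [] ∧ h w ∈ F}

private lemma aux_evalFrom {A S : Type} [Semigroup S] (h : List A → S)
    (hh : IsWordHom h) (M : DFA A (Option S))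
    (hstep : ∀ (s : Option S) (a : A),
      M.step s a = some ((s.elim (h [a]) (fun x => x * h [a])))) :
    ∀ w : List A, w ≠ [] → ∀ s : S, M.evalFrom (some s) w = some (s * h w) := by
  intro w
  induction w with
  | nil => intro hne; exact absurd rfl hne
  | cons a t ih =>
    intro _ s
    rcases eq_or_ne t [] with rfl | ht
    · simp [DFA.evalFrom, hstep]
    · have : M.evalFrom (some s) (a :: t) = M.evalFrom (M.step (some s) a) t := rfl
      rw [this, hstep, ih ht]
      have : h (a :: t) = h [a] * h t := hh [a] t (by simp) ht
      simp [this, mul_assoc]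

/-- A language of nonempty words is regular iff it is recognised by a finite semigroup. -/
theorem regular_iff_recognised_by_finite_semigroup
    {A : Type} [Fintype A] (L : Set (List A)) (hL : [] ∉ L) :
    Language.IsRegular (L : Language A) ↔
      ∃ (S : FinSemigroup) (h : List A → S.carrier) (F : Set S.carrier),
        RecognisedBy h F L := by
  constructor
  · rintro ⟨σ, _, M, hM⟩
    haveI : Finite (Function.End σ) := inferInstanceAs (Finite (σ → σ))
    haveI : Finite (Function.End σ)ᵐᵒᵖ := Finite.of_equiv _ MulOpposite.opEquiv
    refine ⟨⟨(Function.End σ)ᵐᵒᵖ⟩, fun w => MulOpposite.op (fun s => M.evalFrom s w),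
      {f | f.unop M.start ∈ M.accept}, ?_, ?_⟩
    · intro u v hu hv
      apply MulOpposite.unop_injective
      exact funext fun s => M.evalFrom_of_append s u v
    · ext w
      have hw : w ∈ L ↔ w ∈ M.accepts := by rw [hM]; exact Iff.rfl
      rcases eq_or_ne w [] with rfl | hne
      · simp [hL, hw]
      · simp only [Set.mem_setOf_eq, hne, ne_eq, not_false_iff, true_and]
        rw [hw]
        rfl
  · rintro ⟨S, h, F, hh, hLF⟩
    haveI : Fintype S.carrier := Fintype.ofFinite _
    refine ⟨Option S.carrier, inferInstance,
      ⟨fun s a => some (s.elim (h [a]) (fun x => x * h [a])), none,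
        {x | ∃ s ∈ F, x = some s}⟩, ?_⟩
    set M : DFA A (Option S.carrier) :=
      ⟨fun s a => some (s.elim (h [a]) (fun x => x * h [a])), none,
        {x | ∃ s ∈ F, x = some s}⟩ with hMdef
    have key := aux_evalFrom h hh M (fun s a => rfl)
    have heval : ∀ w : List A, w ≠ [] → M.eval w = some (h w) := by
      intro w hw
      match w, hw with
      | a :: t, _ =>
        have : M.eval (a :: t) = M.evalFrom (some (h [a])) t := rfl
        rcases eq_or_ne t [] with rfl | ht
        · simpa using this
        · rw [this, key t ht, show (a :: t) = [a] ++ t from rfl,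
            hh [a] t (by simp) ht]
    ext w
    rcases eq_or_ne w [] with rfl | hne
    · constructor
      · intro hw
        have hw' : ∃ s ∈ F, (none : Option S.carrier) = some s := hw
        rcases hw' with ⟨s, _, hs⟩
        exact absurd hs (by simp)
      · intro hw; exact absurd hw hL
    · have : w ∈ M.accepts ↔ M.eval w ∈ M.accept := Iff.rfl
      change w ∈ M.accepts ↔ M.accept (M.eval w) at this
      constructor
      · intro hw
        rcases (this.mp hw) with ⟨s, hsF, hs⟩
        rw [heval w hne] at hs
        rw [hLF]
        exact ⟨hne, Option.some_inj.mp hs ▸ hsF⟩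
      · intro hw
        rw [hLF] at hw
        exact this.mpr ⟨h w, hw.2, heval w hne⟩
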